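/- Let T : E → F be a linear map between Jordan Banach triples such that the map (a,b,c) ↦ T({a,b,c}) − {T(a),T(b),T(c)} is bounded (a generalised triple homomorphism). Suppose F is anisotropic and that the restriction of T to the closed inner ideal E(a) generated by any single norm-one element a is continuous. Then every element of the separating space σ(T) satisfies z^[3] = {z,z,z} = 0, and hence T is continuous. -/

import Mathlib

open Filter Topology

/-- A (real) Jordan Banach triple: a Banach space with a continuous triple
product, (real-)linear in each variable, symmetric in the outer variables and
satisfying the Jordan identity. -/
structure JordanBanachTriple (E : Type*) [NormedAddCommGroup E] [NormedSpace ℝ E] where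
  tp : E → E → E → E
  add_left : ∀ a a' b c, tp (a + a') b c = tp a b c + tp a' b c
  smul_left : ∀ (r : ℝ) a b c, tp (r • a) b c = r • tp a b c
  add_mid : ∀ a b b' c, tp a (b + b') c = tp a b c + tp a b' c
  smul_mid : ∀ (r : ℝ) a b c, tp a (r • b) c = r • tp a b c
  symm : ∀ a b c, tp a b c = tp c b a
  jordan : ∀ a b x y z,
    tp a b (tp x y z) = tp (tp a b x) y z - tp x (tp b a y) z + tp x y (tp a b z)
  bound : ∃ C > 0, ∀ a b c, ‖tp a b c‖ ≤ C * ‖a‖ * ‖b‖ * ‖c‖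

def sepSpace {X Y : Type*} [NormedAddCommGroup X] [NormedAddCommGroup Y]
    (T : X → Y) : Set Y :=
  {z | ∃ x : ℕ → X, Tendsto x atTop (𝓝 0) ∧ Tendsto (fun n => T (x n)) atTop (𝓝 z)}

section Aux

variable {G : Type*} [NormedAddCommGroup G] [NormedSpace ℝ G]

lemma jbt_zero_mid (J : JordanBanachTriple G) (a c : G) : J.tp a 0 c = 0 := by
  have h := J.smul_mid 0 a 0 c
  simpa using h

lemma jbt_sub_left (J : JordanBanachTriple G) (a a' b c : G) :
    J.tp (a - a') b c = J.tp a b c - J.tp a' b c := by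
  have hn : J.tp (-a') b c = -J.tp a' b c := by
    have := J.smul_left (-1) a' b c
    simpa using this
  rw [sub_eq_add_neg, J.add_left, hn, sub_eq_add_neg]

lemma jbt_sub_mid (J : JordanBanachTriple G) (a b b' c : G) :
    J.tp a (b - b') c = J.tp a b c - J.tp a b' c := by
  have hn : J.tp a (-b') c = -J.tp a b' c := by
    have := J.smul_mid (-1) a b' c
    simpa using this
  rw [sub_eq_add_neg, J.add_mid, hn, sub_eq_add_neg]

lemma jbt_sub_right (J : JordanBanachTriple G) (a b c c' : G) :
    J.tp a b (c - c') = J.tp a b c - J.tp a b c' := by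
  rw [J.symm, jbt_sub_left, J.symm, J.symm c' b a]

lemma jbt_tendsto (J : JordanBanachTriple G) {a b c : ℕ → G} {la lb lc : G}
    (ha : Tendsto a atTop (𝓝 la)) (hb : Tendsto b atTop (𝓝 lb))
    (hc : Tendsto c atTop (𝓝 lc)) :
    Tendsto (fun n => J.tp (a n) (b n) (c n)) atTop (𝓝 (J.tp la lb lc)) := by
  obtain ⟨C, hCpos, hbd⟩ := J.bound
  rw [tendsto_iff_norm_sub_tendsto_zero]
  have key : ∀ n, ‖J.tp (a n) (b n) (c n) - J.tp la lb lc‖ ≤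
      C * ‖a n - la‖ * ‖b n‖ * ‖c n‖ + C * ‖la‖ * ‖b n - lb‖ * ‖c n‖
        + C * ‖la‖ * ‖lb‖ * ‖c n - lc‖ := by
    intro n
    have e : J.tp (a n) (b n) (c n) - J.tp la lb lc =
        J.tp (a n - la) (b n) (c n) + J.tp la (b n - lb) (c n)
          + J.tp la lb (c n - lc) := by
      rw [jbt_sub_left, jbt_sub_mid, jbt_sub_right]; abel
    calc ‖J.tp (a n) (b n) (c n) - J.tp la lb lc‖
        ≤ ‖J.tp (a n - la) (b n) (c n)‖ + ‖J.tp la (b n - lb) (c n)‖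
            + ‖J.tp la lb (c n - lc)‖ := by rw [e]; exact norm_add₃_le
      _ ≤ _ := by
          gcongr <;> [exact hbd _ _ _; exact hbd _ _ _; exact hbd _ _ _]
  refine squeeze_zero (fun n => norm_nonneg _) key ?_
  have h1 : Tendsto (fun n => ‖a n - la‖) atTop (𝓝 0) :=
    tendsto_iff_norm_sub_tendsto_zero.mp ha
  have h2 : Tendsto (fun n => ‖b n - lb‖) atTop (𝓝 0) :=
    tendsto_iff_norm_sub_tendsto_zero.mp hb
  have h3 : Tendsto (fun n => ‖c n - lc‖) atTop (𝓝 0) :=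
    tendsto_iff_norm_sub_tendsto_zero.mp hc
  have := (((tendsto_const_nhds (x := C)).mul h1).mul hb.norm).mul hc.norm |>.add
    ((((tendsto_const_nhds (x := C * ‖la‖)).mul h2).mul hc.norm).add
      (((tendsto_const_nhds (x := C * ‖la‖ * ‖lb‖)).mul h3)))
  simpa [mul_assoc, add_assoc] using this

end Aux

/-- If `F` is anisotropic and the restriction of the generalised triple
homomorphism `T` to every closed inner ideal `E(a)` generated by a single
norm-one element is continuous, then every element of the separating space is
nilpotent of order `3`, and hence `T` is continuous. -/
theorem stmt12 {E F : Type*}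
    [NormedAddCommGroup E] [NormedSpace ℝ E] [CompleteSpace E]
    [NormedAddCommGroup F] [NormedSpace ℝ F] [CompleteSpace F]
    (JE : JordanBanachTriple E) (JF : JordanBanachTriple F)
    (T : E →ₗ[ℝ] F) (C : ℝ) (hC : 0 < C)
    (h : ∀ a b c, ‖T (JE.tp a b c) - JF.tp (T a) (T b) (T c)‖ ≤ C * ‖a‖ * ‖b‖ * ‖c‖)
    (haniso : ∀ z : F, JF.tp z z z = 0 → z = 0)
    (hrestr : ∀ a : E, ‖a‖ = 1 →
      ContinuousOn T (closure {y : E | ∃ x : E, y = JE.tp a x a})) :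
    (∀ z ∈ sepSpace T, JF.tp z z z = 0) ∧ Continuous T := by
  have key : ∀ z ∈ sepSpace T, JF.tp z z z = 0 := by
    rintro z ⟨x, hx0, hxz⟩
    -- Step 1 : for every b, {T b, z, T b} = 0
    have step2 : ∀ b : E, JF.tp (T b) z (T b) = 0 := by
      intro b
      by_cases hb : b = 0
      · subst hb
        have : (0 : E) = (0 : ℝ) • (0 : E) := by simp
        simp only [map_zero]
        have := JF.smul_left 0 ((0:ℝ) • (0:F)) z 0
        simpa using this
      · have hbn : ‖b‖ ≠ 0 := norm_ne_zero_iff.mpr hb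
        set a : E := ‖b‖⁻¹ • b with ha_def
        have ha : ‖a‖ = 1 := by
          rw [ha_def, norm_smul, norm_inv, norm_norm, inv_mul_cancel₀ hbn]
        set S : Set E := {y : E | ∃ x : E, y = JE.tp a x a} with hS_def
        have hmem : ∀ u : E, JE.tp b u b ∈ S := by
          intro u
          refine ⟨(‖b‖ * ‖b‖) • u, ?_⟩
          have e1 : JE.tp a ((‖b‖ * ‖b‖) • u) a
              = (‖b‖⁻¹ * (‖b‖⁻¹ * (‖b‖ * ‖b‖))) • JE.tp b u b := by
            rw [ha_def, JE.smul_left, JE.symm b ((‖b‖ * ‖b‖) • u) (‖b‖⁻¹ • b),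
              JE.smul_left, JE.smul_mid, smul_smul, smul_smul, mul_assoc]
          have e2 : ‖b‖⁻¹ * (‖b‖⁻¹ * (‖b‖ * ‖b‖)) = 1 := by field_simp
          rw [e1, e2, one_smul]
        have hzeroS : (0 : E) ∈ S := ⟨0, (jbt_zero_mid JE a a).symm⟩
        set s : ℕ → E := fun n => JE.tp b (x n) b with hs_def
        have hs0 : Tendsto s atTop (𝓝 0) := by
          have := jbt_tendsto JE (a := fun _ => b) (b := x) (c := fun _ => b)
            tendsto_const_nhds hx0 tendsto_const_nhds
          simpa [hs_def, jbt_zero_mid JE b b] using this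
        -- T ∘ s tends to 0 by continuity on closure S
        have hTs : Tendsto (fun n => T (s n)) atTop (𝓝 0) := by
          have hcw : ContinuousWithinAt T (closure S) 0 :=
            hrestr a ha 0 (subset_closure hzeroS)
          have hsin : ∀ n, s n ∈ closure S := fun n => subset_closure (hmem (x n))
          have : Tendsto s atTop (𝓝[closure S] 0) :=
            tendsto_nhdsWithin_of_tendsto_nhds_of_eventually_within s hs0
              (Eventually.of_forall hsin)
          have := hcw.tendsto.comp this
          simpa [Function.comp_def] using this
        -- the defect is small
        have hdef : Tendsto (fun n => T (s n) - JF.tp (T b) (T (x n)) (T b))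
            atTop (𝓝 0) := by
          refine squeeze_zero_norm (a := fun n => C * ‖b‖ * ‖x n‖ * ‖b‖)
            (fun n => h b (x n) b) ?_
          have := ((tendsto_const_nhds (x := C * ‖b‖)).mul hx0.norm).mul
            (tendsto_const_nhds (x := ‖b‖))
          simpa [mul_assoc] using this
        have hlim0 : Tendsto (fun n => JF.tp (T b) (T (x n)) (T b)) atTop (𝓝 0) := by
          have := hTs.sub hdef
          simpa using this
        have hlim1 : Tendsto (fun n => JF.tp (T b) (T (x n)) (T b)) atTop
            (𝓝 (JF.tp (T b) z (T b))) :=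
          jbt_tendsto JF tendsto_const_nhds hxz tendsto_const_nhds
        exact (tendsto_nhds_unique hlim1 hlim0)
    -- Step 2 : pass to the limit
    have hlim : Tendsto (fun n => JF.tp (T (x n)) z (T (x n))) atTop
        (𝓝 (JF.tp z z z)) :=
      jbt_tendsto JF hxz tendsto_const_nhds hxz
    have : Tendsto (fun _ : ℕ => (0 : F)) atTop (𝓝 (JF.tp z z z)) := by
      simpa [fun n => step2 (x n)] using hlim
    exact (tendsto_nhds_unique tendsto_const_nhds this).symm
  refine ⟨key, ?_⟩
  refine T.continuous_of_seq_closed_graph ?_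
  intro u x y hux huy
  have hz : y - T x ∈ sepSpace T := by
    refine ⟨fun n => u n - x, ?_, ?_⟩
    · simpa using hux.sub (tendsto_const_nhds (x := x))
    · simpa [map_sub] using huy.sub (tendsto_const_nhds (x := T x))
  have := haniso _ (key _ hz)
  exact sub_eq_zero.mp this
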